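/- For every integer n > 2: ∫₁^∞ (t^n - 1)^{-(n-1)/n} dt = ∫₀^∞ (1 + t^n)^{-(n-1)/n} dt. -/

import Mathlib

open Real MeasureTheory Set

theorem stmt_11 (n : ℕ) (hn : 2 < n) :
    (∫ t in Ioi (1:ℝ), (t ^ n - 1) ^ (-((n - 1 : ℝ)/n)))
      = ∫ t in Ioi (0:ℝ), (1 + t ^ n) ^ (-((n - 1 : ℝ)/n)) := by
  have hn0 : n ≠ 0 := by omega
  have hnR : (0:ℝ) < n := by exact_mod_cast Nat.pos_of_ne_zero hn0
  set f : ℝ → ℝ := fun x => (1 + x ^ n) ^ ((n:ℝ)⁻¹) with hf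
  set F : ℝ → ℝ := fun x =>
    (n:ℝ) * x ^ (n-1) * (n:ℝ)⁻¹ * (1 + x ^ n) ^ ((n:ℝ)⁻¹ - 1) with hF
  have hderiv : ∀ x ∈ Ioi (0:ℝ), HasDerivWithinAt f (F x) (Ioi 0) x := by
    intro x hx
    have hx0 : (0:ℝ) < x := hx
    have h1 : (0:ℝ) < 1 + x ^ n := by
      have : (0:ℝ) < x ^ n := pow_pos hx0 n
      linarith
    have hd : HasDerivAt (fun x : ℝ => 1 + x ^ n) ((n:ℝ) * x ^ (n-1)) x := by
      simpa using (hasDerivAt_pow n x).const_add 1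
    exact (hd.rpow_const (Or.inl h1.ne')).hasDerivWithinAt
  have hmono : StrictMonoOn f (Ioi 0) := by
    intro a ha b hb hab
    have ha0 : (0:ℝ) < a := ha
    have : 1 + a ^ n < 1 + b ^ n := by
      have := pow_lt_pow_left₀ hab ha0.le hn0
      linarith
    exact Real.rpow_lt_rpow (by positivity) this (by positivity)
  have himg : f '' Ioi 0 = Ioi (1:ℝ) := by
    ext y
    constructor
    · rintro ⟨x, hx, rfl⟩
      have hx0 : (0:ℝ) < x := hx
      have h1 : (1:ℝ) < 1 + x ^ n := by
        have : (0:ℝ) < x ^ n := pow_pos hx0 n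
        linarith
      exact (Real.one_lt_rpow_iff_of_pos (by linarith : (0:ℝ) < 1 + x ^ n)
        (y := (n:ℝ)⁻¹)).mpr (Or.inl ⟨h1, by positivity⟩)
    · intro hy
      have hy1 : (1:ℝ) < y := hy
      have hyn : (1:ℝ) < y ^ n := one_lt_pow₀ hy1 hn0
      refine ⟨(y ^ n - 1) ^ ((n:ℝ)⁻¹), ?_, ?_⟩
      · exact Real.rpow_pos_of_pos (by linarith) _
      · have hpow : ((y ^ n - 1) ^ ((n:ℝ)⁻¹)) ^ n = y ^ n - 1 :=
          Real.rpow_inv_natCast_pow (by linarith) hn0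
        simp only [hf, hpow]
        rw [show (1 + (y ^ n - 1)) = y ^ n by ring]
        exact Real.pow_rpow_inv_natCast (by linarith) hn0
  rw [← himg,
    integral_image_eq_integral_abs_deriv_smul measurableSet_Ioi hderiv
      (hmono.injOn)]
  apply setIntegral_congr_fun measurableSet_Ioi
  intro x hx
  have hx0 : (0:ℝ) < x := hx
  have h1 : (0:ℝ) < 1 + x ^ n := by
    have : (0:ℝ) < x ^ n := pow_pos hx0 n
    linarith
  have hfx : f x ^ n = 1 + x ^ n := Real.rpow_inv_natCast_pow h1.le hn0
  have hfx' : f x ^ n - 1 = x ^ n := by rw [hfx]; ring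
  have hFpos : 0 < F x := by
    simp only [hF]
    exact mul_pos (mul_pos (mul_pos hnR (pow_pos hx0 _)) (inv_pos.mpr hnR))
      (Real.rpow_pos_of_pos h1 _)
  show |F x| • (f x ^ n - 1) ^ (-(((n:ℝ) - 1) / n)) = (1 + x ^ n) ^ (-(((n:ℝ) - 1) / n))
  rw [smul_eq_mul, abs_of_pos hFpos, hfx']
  simp only [hF]
  have hA : (x ^ n : ℝ) ^ (-(((n:ℝ) - 1) / n)) = x ^ (-((n:ℝ) - 1)) := by
    rw [← Real.rpow_natCast x n, ← Real.rpow_mul hx0.le]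
    congr 1
    field_simp
  have hB : (x : ℝ) ^ (n - 1) = x ^ ((n:ℝ) - 1) := by
    rw [← Real.rpow_natCast x (n-1)]
    congr 1
    push_cast [Nat.cast_sub (by omega : 1 ≤ n)]
    ring
  have hC : x ^ ((n:ℝ) - 1) * x ^ (-((n:ℝ) - 1)) = 1 := by
    rw [← Real.rpow_add hx0]
    simp
  have hD : (n:ℝ)⁻¹ - 1 = -(((n:ℝ) - 1) / n) := by
    field_simp
    ring
  rw [hA, hB, hD]
  have hre : (n:ℝ) * x ^ ((n:ℝ) - 1) * (n:ℝ)⁻¹ *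
      (1 + x ^ n) ^ (-(((n:ℝ) - 1) / n)) * x ^ (-((n:ℝ) - 1))
      = ((n:ℝ) * (n:ℝ)⁻¹) * (x ^ ((n:ℝ) - 1) * x ^ (-((n:ℝ) - 1))) *
        (1 + x ^ n) ^ (-(((n:ℝ) - 1) / n)) := by ring
  rw [hre, hC, mul_inv_cancel₀ hnR.ne', one_mul, one_mul]
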